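/- Let K = ℚ[b]/(b³ − 99b² − 90b − 9), a cubic number field, let b denote the image of the variable in K, and set c = (−2b² + 318b − 75)/753 ∈ K. Then the Kubert-Tate curve E(b, c) over K, given by y² + (1−c)xy − by = x³ − bx², is an elliptic curve (its discriminant is nonzero) and the point (0,0) on it has order exactly 9. -/

import Mathlib

/-- The Kubert-Tate normal form curve E(b,c) : y^2 + (1-c)xy - by = x^3 - bx^2. -/
def Ebc {K : Type*} [CommRing K] (b c : K) : WeierstrassCurve.Affine K :=
  { a₁ := 1 - c, a₂ := -b, a₃ := -b, a₄ := 0, a₆ := 0 }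

open Polynomial

/-- The cubic number field K = ℚ[b]/(b³ - 99b² - 90b - 9); the defining polynomial is
irreducible over ℚ, which is recorded as the `Fact` hypothesis below. -/
def K19 : Type := AdjoinRoot (X ^ 3 - 99 * X ^ 2 - 90 * X - 9 : ℚ[X])

noncomputable instance [Fact (Irreducible (X ^ 3 - 99 * X ^ 2 - 90 * X - 9 : ℚ[X]))] :
    Field K19 :=
  inferInstanceAs (Field (AdjoinRoot _))

/-- The image b of the variable in K = ℚ[b]/(b³ - 99b² - 90b - 9). -/
noncomputable def b19 : K19 := AdjoinRoot.root _

/-- The element c = (-2b² + 318b - 75)/753 of K. -/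
noncomputable def c19 [Fact (Irreducible (X ^ 3 - 99 * X ^ 2 - 90 * X - 9 : ℚ[X]))] : K19 :=
  (-2 * b19 ^ 2 + 318 * b19 - 75) / 753

noncomputable instance [Fact (Irreducible (X ^ 3 - 99 * X ^ 2 - 90 * X - 9 : ℚ[X]))] :
    Algebra ℚ K19 := inferInstanceAs (Algebra ℚ (AdjoinRoot _))

instance [Fact (Irreducible (X ^ 3 - 99 * X ^ 2 - 90 * X - 9 : ℚ[X]))] : CharZero K19 :=
  charZero_of_injective_algebraMap (algebraMap ℚ K19).injective

private lemma some_congr {R : Type*} [CommRing R] {W : WeierstrassCurve.Affine R}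
    {x₁ y₁ x₂ y₂ : R} (h₁ : W.Nonsingular x₁ y₁) (h₂ : W.Nonsingular x₂ y₂)
    (hx : x₁ = x₂) (hy : y₁ = y₂) :
    WeierstrassCurve.Affine.Point.some _ _ h₁ = WeierstrassCurve.Affine.Point.some _ _ h₂ := by
  subst hx; subst hy; rfl

open Classical in
theorem stmt_19 [Fact (Irreducible (X ^ 3 - 99 * X ^ 2 - 90 * X - 9 : ℚ[X]))] :
    (Ebc b19 c19).Δ ≠ 0 ∧
    ∃ h : (Ebc b19 c19).Nonsingular 0 0,
      addOrderOf (WeierstrassCurve.Affine.Point.some 0 0 h) = 9 := by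
  have hr : b19 ^ 3 = 99 * b19 ^ 2 + 90 * b19 + 9 := by
    have h0 := AdjoinRoot.eval₂_root (X ^ 3 - 99 * X ^ 2 - 90 * X - 9 : ℚ[X])
    simp only [eval₂_sub, eval₂_pow, eval₂_mul, eval₂_X, eval₂_ofNat] at h0
    have h1 : b19 ^ 3 - 99 * b19 ^ 2 - 90 * b19 - 9 = 0 := h0
    linear_combination h1
  have h753 : (753 : K19) ≠ 0 := by norm_num
  have hc : (753 : K19) * c19 = -2 * b19 ^ 2 + 318 * b19 - 75 := by
    unfold c19; rw [mul_comm, div_mul_cancel₀ _ h753]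
  have hDval : (Ebc b19 c19).Δ = ((-38233107 : K19)/251) + ((-382713903 : K19)/251) * b19 + ((-424396179 : K19)/251) * b19^2 := by
    simp only [WeierstrassCurve.Δ, WeierstrassCurve.b₂, WeierstrassCurve.b₄,
      WeierstrassCurve.b₆, WeierstrassCurve.b₈, Ebc]
    linear_combination (((-7008192 : K19)/3969126001) * b19^3 + ((-279440852 : K19)/11907378003) * b19^4 + ((-62880608 : K19)/11907378003) * b19^5 + ((4932136 : K19)/35722134009) * b19^6 + ((-22840 : K19)/11907378003) * b19^7 + ((424 : K19)/35722134009) * b19^8 + ((-8 : K19)/321499206081) * b19^9 + ((208453 : K19)/47439753) * b19^3 * c19 + ((-589126 : K19)/47439753) * b19^4 * c19 + ((35314 : K19)/142319259) * b19^5 * c19 + ((-424 : K19)/142319259) * b19^6 * c19 + ((4 : K19)/426957777) * b19^7 * c19 + ((-778 : K19)/189003) * b19^3 * c19^2 + ((106 : K19)/189003) * b19^4 * c19^2 + ((-2 : K19)/567009) * b19^5 * c19^2 + ((1 : K19)/753) * b19^3 * c19^3) * hc + (((-4248123 : K19)/251) + ((-42537 : K19)/251) * b19 + ((-408 : K19)/251)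 * b19^2 + ((-1440264880 : K19)/11907378003) * b19^3 + ((187326920 : K19)/11907378003) * b19^4 + ((-14190256 : K19)/35722134009) * b19^5 + ((532760 : K19)/107166402027) * b19^6 + ((-2864 : K19)/107166402027) * b19^7 + ((16 : K19)/321499206081) * b19^8) * hr
  have hDne : (((-38233107 : K19)/251) + ((-382713903 : K19)/251) * b19 + ((-424396179 : K19)/251) * b19^2) ≠ 0 := by
    intro h; apply one_ne_zero (α := K19)
    linear_combination (((-15935864363 : K19)/6777) + ((-6693284090 : K19)/2259) * b19 + ((67530883 : K19)/2259) * b19^2) * h + (((2507315256487098 : K19)/63001) + ((3184427634410673 : K19)/63001) * b19) * hr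
  have hD : (Ebc b19 c19).Δ ≠ 0 := by rw [hDval]; exact hDne
  have hbne : ((1 : K19) * b19) ≠ 0 := by
    intro h; apply one_ne_zero (α := K19)
    linear_combination ((-10 : K19) + (-11 : K19) * b19 + ((1 : K19)/9) * b19^2) * h + (((-1 : K19)/9)) * hr
  have heq1 : (Ebc b19 c19).Equation 0 0 := by
    rw [WeierstrassCurve.Affine.equation_iff]; simp only [Ebc]; ring1
  have hns1 : (Ebc b19 c19).Nonsingular 0 0 := (WeierstrassCurve.Affine.equation_iff_nonsingular_of_Δ_ne_zero (W := Ebc b19 c19) hD).mp heq1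
  have heq2 : (Ebc b19 c19).Equation ((1 : K19) * b19) (((-6 : K19)/251) + ((-85 : K19)/251) * b19 + ((40 : K19)/251) * b19^2) := by
    rw [WeierstrassCurve.Affine.equation_iff]; simp only [Ebc]
    linear_combination (((2 : K19)/63001) * b19 + ((85 : K19)/189003) * b19^2 + ((-40 : K19)/189003) * b19^3) * hc + (((-4 : K19)/63001) + ((-170 : K19)/189003) * b19 + ((80 : K19)/189003) * b19^2) * hr
  have hns2 : (Ebc b19 c19).Nonsingular ((1 : K19) * b19) (((-6 : K19)/251) + ((-85 : K19)/251) * b19 + ((40 : K19)/251) * b19^2) :=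
    (WeierstrassCurve.Affine.equation_iff_nonsingular_of_Δ_ne_zero (W := Ebc b19 c19) hD).mp heq2
  have heq3 : (Ebc b19 c19).Equation (((-25 : K19)/251) + ((106 : K19)/251) * b19 + ((-2 : K19)/753) * b19^2) (((25 : K19)/251) + ((145 : K19)/251) * b19 + ((2 : K19)/753) * b19^2) := by
    rw [WeierstrassCurve.Affine.equation_iff]; simp only [Ebc]
    linear_combination (((625 : K19)/47439753) + ((325 : K19)/15813251) * b19 + ((-46010 : K19)/142319259) * b19^2 + ((26 : K19)/47439753) * b19^3 + ((4 : K19)/426957777) * b19^4) * hc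
  have hns3 : (Ebc b19 c19).Nonsingular (((-25 : K19)/251) + ((106 : K19)/251) * b19 + ((-2 : K19)/753) * b19^2) (((25 : K19)/251) + ((145 : K19)/251) * b19 + ((2 : K19)/753) * b19^2) :=
    (WeierstrassCurve.Affine.equation_iff_nonsingular_of_Δ_ne_zero (W := Ebc b19 c19) hD).mp heq3
  have heq4 : (Ebc b19 c19).Equation (((-114 : K19)/251) + ((-611 : K19)/251) * b19 + ((7 : K19)/251) * b19^2) (((189 : K19)/251) + ((1548 : K19)/251) * b19 + ((-5 : K19)/251) * b19^2) := by
    rw [WeierstrassCurve.Affine.equation_iff]; simp only [Ebc]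
    linear_combination (((7182 : K19)/15813251) + ((97317 : K19)/15813251) * b19 + ((314645 : K19)/15813251) * b19^2 + ((-13891 : K19)/47439753) * b19^3 + ((35 : K19)/47439753) * b19^4) * hc + (((-500091 : K19)/15813251) + ((-4304981 : K19)/15813251) * b19 + ((236459 : K19)/47439753) * b19^2 + ((-1099 : K19)/47439753) * b19^3) * hr
  have hns4 : (Ebc b19 c19).Nonsingular (((-114 : K19)/251) + ((-611 : K19)/251) * b19 + ((7 : K19)/251) * b19^2) (((189 : K19)/251) + ((1548 : K19)/251) * b19 + ((-5 : K19)/251) * b19^2) :=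
    (WeierstrassCurve.Affine.equation_iff_nonsingular_of_Δ_ne_zero (W := Ebc b19 c19) hD).mp heq4
  have heq5 : (Ebc b19 c19).Equation (((-114 : K19)/251) + ((-611 : K19)/251) * b19 + ((7 : K19)/251) * b19^2) (((-39 : K19)/251) + ((-427 : K19)/251) * b19 + ((9 : K19)/251) * b19^2) := by
    rw [WeierstrassCurve.Affine.equation_iff]; simp only [Ebc]
    linear_combination (((-1482 : K19)/15813251) + ((-24169 : K19)/15813251) * b19 + ((-259598 : K19)/47439753) * b19^2 + ((8488 : K19)/47439753) * b19^3 + ((-21 : K19)/15813251) * b19^4) * hc + (((-343379 : K19)/15813251) + ((-8845685 : K19)/47439753) * b19 + ((179941 : K19)/47439753) * b19^2 + ((-301 : K19)/15813251) * b19^3) * hr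
  have hns5 : (Ebc b19 c19).Nonsingular (((-114 : K19)/251) + ((-611 : K19)/251) * b19 + ((7 : K19)/251) * b19^2) (((-39 : K19)/251) + ((-427 : K19)/251) * b19 + ((9 : K19)/251) * b19^2) :=
    (WeierstrassCurve.Affine.equation_iff_nonsingular_of_Δ_ne_zero (W := Ebc b19 c19) hD).mp heq5
  have heq6 : (Ebc b19 c19).Equation (((-25 : K19)/251) + ((106 : K19)/251) * b19 + ((-2 : K19)/753) * b19^2) (((-1 : K19)/251) + ((-56 : K19)/251) * b19 + ((20 : K19)/753) * b19^2) := by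
    rw [WeierstrassCurve.Affine.equation_iff]; simp only [Ebc]
    linear_combination (((-25 : K19)/47439753) + ((-1294 : K19)/47439753) * b19 + ((2034 : K19)/15813251) * b19^2 + ((-248 : K19)/15813251) * b19^3 + ((40 : K19)/426957777) * b19^4) * hc + (((-7592 : K19)/47439753) + ((-175972 : K19)/142319259) * b19 + ((2020 : K19)/47439753) * b19^2 + ((-8 : K19)/47439753) * b19^3) * hr
  have hns6 : (Ebc b19 c19).Nonsingular (((-25 : K19)/251) + ((106 : K19)/251) * b19 + ((-2 : K19)/753) * b19^2) (((-1 : K19)/251) + ((-56 : K19)/251) * b19 + ((20 : K19)/753) * b19^2) :=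
    (WeierstrassCurve.Affine.equation_iff_nonsingular_of_Δ_ne_zero (W := Ebc b19 c19) hD).mp heq6
  have heq7 : (Ebc b19 c19).Equation ((1 : K19) * b19) ((0 : K19)) := by
    rw [WeierstrassCurve.Affine.equation_iff]; simp only [Ebc]
    ring1
  have hns7 : (Ebc b19 c19).Nonsingular ((1 : K19) * b19) ((0 : K19)) :=
    (WeierstrassCurve.Affine.equation_iff_nonsingular_of_Δ_ne_zero (W := Ebc b19 c19) hD).mp heq7
  have heq8 : (Ebc b19 c19).Equation ((0 : K19)) ((1 : K19) * b19) := by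
    rw [WeierstrassCurve.Affine.equation_iff]; simp only [Ebc]
    ring1
  have hns8 : (Ebc b19 c19).Nonsingular ((0 : K19)) ((1 : K19) * b19) :=
    (WeierstrassCurve.Affine.equation_iff_nonsingular_of_Δ_ne_zero (W := Ebc b19 c19) hD).mp heq8
  have hx2 : ((1 : K19) * b19) ≠ 0 := by
    intro h; apply one_ne_zero (α := K19)
    linear_combination ((-10 : K19) + (-11 : K19) * b19 + ((1 : K19)/9) * b19^2) * h + (((-1 : K19)/9)) * hr
  have hx3 : (((-25 : K19)/251) + ((106 : K19)/251) * b19 + ((-2 : K19)/753) * b19^2) ≠ 0 := by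
    intro h; apply one_ne_zero (α := K19)
    linear_combination (((-1885 : K19)/251) + ((-1646 : K19)/251) * b19 + ((50 : K19)/753) * b19^2) * h + (((-1764 : K19)/63001) + ((100 : K19)/567009) * b19) * hr
  have hx4 : (((-114 : K19)/251) + ((-611 : K19)/251) * b19 + ((7 : K19)/251) * b19^2) ≠ 0 := by
    intro h; apply one_ne_zero (α := K19)
    linear_combination (((-1702 : K19)/251) + ((-7075 : K19)/753) * b19 + ((214 : K19)/2259) * b19^2) * h + (((131027 : K19)/567009) + ((-1498 : K19)/567009) * b19) * hr
  have hx5 : (((-114 : K19)/251) + ((-611 : K19)/251) * b19 + ((7 : K19)/251) * b19^2) ≠ 0 := by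
    intro h; apply one_ne_zero (α := K19)
    linear_combination (((-1702 : K19)/251) + ((-7075 : K19)/753) * b19 + ((214 : K19)/2259) * b19^2) * h + (((131027 : K19)/567009) + ((-1498 : K19)/567009) * b19) * hr
  have hx6 : (((-25 : K19)/251) + ((106 : K19)/251) * b19 + ((-2 : K19)/753) * b19^2) ≠ 0 := by
    intro h; apply one_ne_zero (α := K19)
    linear_combination (((-1885 : K19)/251) + ((-1646 : K19)/251) * b19 + ((50 : K19)/753) * b19^2) * h + (((-1764 : K19)/63001) + ((100 : K19)/567009) * b19) * hr
  have hx7 : ((1 : K19) * b19) ≠ 0 := by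
    intro h; apply one_ne_zero (α := K19)
    linear_combination ((-10 : K19) + (-11 : K19) * b19 + ((1 : K19)/9) * b19^2) * h + (((-1 : K19)/9)) * hr
  have hy1 : (0 : K19) ≠ (Ebc b19 c19).negY 0 0 := by
    simp only [WeierstrassCurve.Affine.negY, Ebc]
    intro h; apply hbne; linear_combination -h
  have hL1 : (Ebc b19 c19).slope 0 0 0 0 = 0 := by
    rw [WeierstrassCurve.Affine.slope_of_Y_ne rfl hy1]; simp [Ebc]
  have hL2 : (Ebc b19 c19).slope ((1 : K19) * b19) 0 (((-6 : K19)/251) + ((-85 : K19)/251) * b19 + ((40 : K19)/251) * b19^2) 0 = (((-25 : K19)/251) + ((106 : K19)/251) * b19 + ((-2 : K19)/753) * b19^2) := by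
    rw [WeierstrassCurve.Affine.slope_of_X_ne hx2, div_eq_iff (sub_ne_zero.mpr hx2)]
    linear_combination (((2 : K19)/753)) * hr
  have hL3 : (Ebc b19 c19).slope (((-25 : K19)/251) + ((106 : K19)/251) * b19 + ((-2 : K19)/753) * b19^2) 0 (((25 : K19)/251) + ((145 : K19)/251) * b19 + ((2 : K19)/753) * b19^2) 0 = (((-101 : K19)/251) + ((-385 : K19)/251) * b19 + ((4 : K19)/251) * b19^2) := by
    rw [WeierstrassCurve.Affine.slope_of_X_ne hx3, div_eq_iff (sub_ne_zero.mpr hx3)]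
    linear_combination (((-1250 : K19)/189003) + ((8 : K19)/189003) * b19) * hr
  have hL4 : (Ebc b19 c19).slope (((-114 : K19)/251) + ((-611 : K19)/251) * b19 + ((7 : K19)/251) * b19^2) 0 (((189 : K19)/251) + ((1548 : K19)/251) * b19 + ((-5 : K19)/251) * b19^2) 0 = (((39 : K19)/251) + ((929 : K19)/251) * b19 + ((-9 : K19)/251) * b19^2) := by
    rw [WeierstrassCurve.Affine.slope_of_X_ne hx4, div_eq_iff (sub_ne_zero.mpr hx4)]
    linear_combination (((-5765 : K19)/63001) + ((63 : K19)/63001) * b19) * hr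
  have hL5 : (Ebc b19 c19).slope (((-114 : K19)/251) + ((-611 : K19)/251) * b19 + ((7 : K19)/251) * b19^2) 0 (((-39 : K19)/251) + ((-427 : K19)/251) * b19 + ((9 : K19)/251) * b19^2) 0 = (((-101 : K19)/251) + ((-385 : K19)/251) * b19 + ((4 : K19)/251) * b19^2) := by
    rw [WeierstrassCurve.Affine.slope_of_X_ne hx5, div_eq_iff (sub_ne_zero.mpr hx5)]
    linear_combination (((2367 : K19)/63001) + ((-28 : K19)/63001) * b19) * hr
  have hL6 : (Ebc b19 c19).slope (((-25 : K19)/251) + ((106 : K19)/251) * b19 + ((-2 : K19)/753) * b19^2) 0 (((-1 : K19)/251) + ((-56 : K19)/251) * b19 + ((20 : K19)/753) * b19^2) 0 = (((-25 : K19)/251) + ((106 : K19)/251) * b19 + ((-2 : K19)/753) * b19^2) := by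
    rw [WeierstrassCurve.Affine.slope_of_X_ne hx6, div_eq_iff (sub_ne_zero.mpr hx6)]
    linear_combination (((292 : K19)/189003) + ((-4 : K19)/567009) * b19) * hr
  have hL7 : (Ebc b19 c19).slope ((1 : K19) * b19) 0 ((0 : K19)) 0 = ((0 : K19)) := by
    rw [WeierstrassCurve.Affine.slope_of_X_ne hx7, div_eq_iff (sub_ne_zero.mpr hx7)]
    ring1
  have hX1 : (Ebc b19 c19).addX (0) 0 ((Ebc b19 c19).slope (0) 0 (0) 0) = ((1 : K19) * b19) := by
    rw [hL1]; simp only [WeierstrassCurve.Affine.addX, Ebc]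
    ring1
  have hY1 : (Ebc b19 c19).addY (0) 0 (0) ((Ebc b19 c19).slope (0) 0 (0) 0) = (((-6 : K19)/251) + ((-85 : K19)/251) * b19 + ((40 : K19)/251) * b19^2) := by
    rw [hL1]; simp only [WeierstrassCurve.Affine.addY, WeierstrassCurve.Affine.negAddY, WeierstrassCurve.Affine.addX, WeierstrassCurve.Affine.negY, Ebc]
    linear_combination (((1 : K19)/753) * b19) * hc + (((-2 : K19)/753)) * hr
  have hX2 : (Ebc b19 c19).addX ((1 : K19) * b19) 0 ((Ebc b19 c19).slope ((1 : K19) * b19) 0 (((-6 : K19)/251) + ((-85 : K19)/251) * b19 + ((40 : K19)/251) * b19^2) 0) = (((-25 : K19)/251) + ((106 : K19)/251) * b19 + ((-2 : K19)/753) * b19^2) := by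
    rw [hL2]; simp only [WeierstrassCurve.Affine.addX, Ebc]
    linear_combination (((25 : K19)/189003) + ((-106 : K19)/189003) * b19 + ((2 : K19)/567009) * b19^2) * hc
  have hY2 : (Ebc b19 c19).addY ((1 : K19) * b19) 0 (((-6 : K19)/251) + ((-85 : K19)/251) * b19 + ((40 : K19)/251) * b19^2) ((Ebc b19 c19).slope ((1 : K19) * b19) 0 (((-6 : K19)/251) + ((-85 : K19)/251) * b19 + ((40 : K19)/251) * b19^2) 0) = (((25 : K19)/251) + ((145 : K19)/251) * b19 + ((2 : K19)/753) * b19^2) := by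
    rw [hL2]; simp only [WeierstrassCurve.Affine.addY, WeierstrassCurve.Affine.negAddY, WeierstrassCurve.Affine.addX, WeierstrassCurve.Affine.negY, Ebc]
    linear_combination (((-3975 : K19)/15813251) + ((47912 : K19)/47439753) * b19 + ((32804 : K19)/142319259) * b19^2 + ((-424 : K19)/142319259) * b19^3 + ((4 : K19)/426957777) * b19^4 + ((25 : K19)/189003) * c19 + ((-106 : K19)/189003) * b19 * c19 + ((2 : K19)/567009) * b19^2 * c19) * hc + (((-2 : K19)/753)) * hr
  have hX3 : (Ebc b19 c19).addX (((-25 : K19)/251) + ((106 : K19)/251) * b19 + ((-2 : K19)/753) * b19^2) 0 ((Ebc b19 c19).slope (((-25 : K19)/251) + ((106 : K19)/251) * b19 + ((-2 : K19)/753) * b19^2) 0 (((25 : K19)/251) + ((145 : K19)/251) * b19 + ((2 : K19)/753) * b19^2) 0) = (((-114 : K19)/251) + ((-611 : K19)/251) * b19 + ((7 : K19)/251) * b19^2) := by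
    rw [hL3]; simp only [WeierstrassCurve.Affine.addX, Ebc]
    linear_combination (((101 : K19)/189003) + ((385 : K19)/189003) * b19 + ((-4 : K19)/189003) * b19^2) * hc + (((-5738 : K19)/189003) + ((56 : K19)/189003) * b19) * hr
  have hY3 : (Ebc b19 c19).addY (((-25 : K19)/251) + ((106 : K19)/251) * b19 + ((-2 : K19)/753) * b19^2) 0 (((25 : K19)/251) + ((145 : K19)/251) * b19 + ((2 : K19)/753) * b19^2) ((Ebc b19 c19).slope (((-25 : K19)/251) + ((106 : K19)/251) * b19 + ((-2 : K19)/753) * b19^2) 0 (((25 : K19)/251) + ((145 : K19)/251) * b19 + ((2 : K19)/753) * b19^2) 0) = (((189 : K19)/251) + ((1548 : K19)/251) * b19 + ((-5 : K19)/251) * b19^2) := by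
    rw [hL3]; simp only [WeierstrassCurve.Affine.addY, WeierstrassCurve.Affine.negAddY, WeierstrassCurve.Affine.addX, WeierstrassCurve.Affine.negY, Ebc]
    linear_combination (((-8850 : K19)/15813251) + ((-254 : K19)/47439753) * b19 + ((337852 : K19)/47439753) * b19^2 + ((-20522 : K19)/142319259) * b19^3 + ((104 : K19)/142319259) * b19^4 + ((101 : K19)/189003) * c19 + ((385 : K19)/189003) * b19 * c19 + ((-4 : K19)/189003) * b19^2 * c19) * hc + (((3617813 : K19)/47439753) + ((-2853764 : K19)/47439753) * b19 + ((162820 : K19)/142319259) * b19^2 + ((-784 : K19)/142319259) * b19^3) * hr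
  have hX4 : (Ebc b19 c19).addX (((-114 : K19)/251) + ((-611 : K19)/251) * b19 + ((7 : K19)/251) * b19^2) 0 ((Ebc b19 c19).slope (((-114 : K19)/251) + ((-611 : K19)/251) * b19 + ((7 : K19)/251) * b19^2) 0 (((189 : K19)/251) + ((1548 : K19)/251) * b19 + ((-5 : K19)/251) * b19^2) 0) = (((-114 : K19)/251) + ((-611 : K19)/251) * b19 + ((7 : K19)/251) * b19^2) := by
    rw [hL4]; simp only [WeierstrassCurve.Affine.addX, Ebc]
    linear_combination (((-13 : K19)/63001) + ((-929 : K19)/189003) * b19 + ((3 : K19)/63001) * b19^2) * hc + (((-23171 : K19)/189003) + ((75 : K19)/63001) * b19) * hr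
  have hY4 : (Ebc b19 c19).addY (((-114 : K19)/251) + ((-611 : K19)/251) * b19 + ((7 : K19)/251) * b19^2) 0 (((189 : K19)/251) + ((1548 : K19)/251) * b19 + ((-5 : K19)/251) * b19^2) ((Ebc b19 c19).slope (((-114 : K19)/251) + ((-611 : K19)/251) * b19 + ((7 : K19)/251) * b19^2) 0 (((189 : K19)/251) + ((1548 : K19)/251) * b19 + ((-5 : K19)/251) * b19^2) 0) = (((-39 : K19)/251) + ((-427 : K19)/251) * b19 + ((9 : K19)/251) * b19^2) := by
    rw [hL4]; simp only [WeierstrassCurve.Affine.addY, WeierstrassCurve.Affine.negAddY, WeierstrassCurve.Affine.addX, WeierstrassCurve.Affine.negY, Ebc]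
    linear_combination (((17403 : K19)/15813251) + ((282245 : K19)/15813251) * b19 + ((539910 : K19)/15813251) * b19^2 + ((-95612 : K19)/142319259) * b19^3 + ((52 : K19)/15813251) * b19^4 + ((-13 : K19)/63001) * c19 + ((-929 : K19)/189003) * b19 * c19 + ((3 : K19)/63001) * b19^2 * c19) * hc + (((7816427 : K19)/47439753) + ((18995344 : K19)/47439753) * b19 + ((-1134800 : K19)/142319259) * b19^2 + ((625 : K19)/15813251) * b19^3) * hr
  have hX5 : (Ebc b19 c19).addX (((-114 : K19)/251) + ((-611 : K19)/251) * b19 + ((7 : K19)/251) * b19^2) 0 ((Ebc b19 c19).slope (((-114 : K19)/251) + ((-611 : K19)/251) * b19 + ((7 : K19)/251) * b19^2) 0 (((-39 : K19)/251) + ((-427 : K19)/251) * b19 + ((9 : K19)/251) * b19^2) 0) = (((-25 : K19)/251) + ((106 : K19)/251) * b19 + ((-2 : K19)/753) * b19^2) := by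
    rw [hL5]; simp only [WeierstrassCurve.Affine.addX, Ebc]
    linear_combination (((101 : K19)/189003) + ((385 : K19)/189003) * b19 + ((-4 : K19)/189003) * b19^2) * hc + (((-5738 : K19)/189003) + ((56 : K19)/189003) * b19) * hr
  have hY5 : (Ebc b19 c19).addY (((-114 : K19)/251) + ((-611 : K19)/251) * b19 + ((7 : K19)/251) * b19^2) 0 (((-39 : K19)/251) + ((-427 : K19)/251) * b19 + ((9 : K19)/251) * b19^2) ((Ebc b19 c19).slope (((-114 : K19)/251) + ((-611 : K19)/251) * b19 + ((7 : K19)/251) * b19^2) 0 (((-39 : K19)/251) + ((-427 : K19)/251) * b19 + ((9 : K19)/251) * b19^2) 0) = (((-1 : K19)/251) + ((-56 : K19)/251) * b19 + ((20 : K19)/753) * b19^2) := by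
    rw [hL5]; simp only [WeierstrassCurve.Affine.addY, WeierstrassCurve.Affine.negAddY, WeierstrassCurve.Affine.addX, WeierstrassCurve.Affine.negY, Ebc]
    linear_combination (((-4211 : K19)/47439753) + ((179713 : K19)/47439753) * b19 + ((1007783 : K19)/142319259) * b19^2 + ((-20522 : K19)/142319259) * b19^3 + ((104 : K19)/142319259) * b19^4 + ((101 : K19)/189003) * c19 + ((385 : K19)/189003) * b19 * c19 + ((-4 : K19)/189003) * b19^2 * c19) * hc + (((-1165243 : K19)/47439753) + ((-8411194 : K19)/142319259) * b19 + ((162820 : K19)/142319259) * b19^2 + ((-784 : K19)/142319259) * b19^3) * hr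
  have hX6 : (Ebc b19 c19).addX (((-25 : K19)/251) + ((106 : K19)/251) * b19 + ((-2 : K19)/753) * b19^2) 0 ((Ebc b19 c19).slope (((-25 : K19)/251) + ((106 : K19)/251) * b19 + ((-2 : K19)/753) * b19^2) 0 (((-1 : K19)/251) + ((-56 : K19)/251) * b19 + ((20 : K19)/753) * b19^2) 0) = ((1 : K19) * b19) := by
    rw [hL6]; simp only [WeierstrassCurve.Affine.addX, Ebc]
    linear_combination (((25 : K19)/189003) + ((-106 : K19)/189003) * b19 + ((2 : K19)/567009) * b19^2) * hc
  have hY6 : (Ebc b19 c19).addY (((-25 : K19)/251) + ((106 : K19)/251) * b19 + ((-2 : K19)/753) * b19^2) 0 (((-1 : K19)/251) + ((-56 : K19)/251) * b19 + ((20 : K19)/753) * b19^2) ((Ebc b19 c19).slope (((-25 : K19)/251) + ((106 : K19)/251) * b19 + ((-2 : K19)/753) * b19^2) 0 (((-1 : K19)/251) + ((-56 : K19)/251) * b19 + ((20 : K19)/753) * b19^2) 0) = ((0 : K19)) := by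
    rw [hL6]; simp only [WeierstrassCurve.Affine.addY, WeierstrassCurve.Affine.negAddY, WeierstrassCurve.Affine.addX, WeierstrassCurve.Affine.negY, Ebc]
    linear_combination (((-5650 : K19)/47439753) + ((84307 : K19)/47439753) * b19 + ((11102 : K19)/47439753) * b19^2 + ((-424 : K19)/142319259) * b19^3 + ((4 : K19)/426957777) * b19^4 + ((25 : K19)/189003) * c19 + ((-106 : K19)/189003) * b19 * c19 + ((2 : K19)/567009) * b19^2 * c19) * hc + (((-292 : K19)/189003) + ((4 : K19)/567009) * b19) * hr
  have hX7 : (Ebc b19 c19).addX ((1 : K19) * b19) 0 ((Ebc b19 c19).slope ((1 : K19) * b19) 0 ((0 : K19)) 0) = ((0 : K19)) := by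
    rw [hL7]; simp only [WeierstrassCurve.Affine.addX, Ebc]
    ring1
  have hY7 : (Ebc b19 c19).addY ((1 : K19) * b19) 0 ((0 : K19)) ((Ebc b19 c19).slope ((1 : K19) * b19) 0 ((0 : K19)) 0) = ((1 : K19) * b19) := by
    rw [hL7]; simp only [WeierstrassCurve.Affine.addY, WeierstrassCurve.Affine.negAddY, WeierstrassCurve.Affine.addX, WeierstrassCurve.Affine.negY, Ebc]
    ring1
  have step1 : WeierstrassCurve.Affine.Point.some _ _ hns1 + WeierstrassCurve.Affine.Point.some _ _ hns1 = WeierstrassCurve.Affine.Point.some _ _ hns2 := by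
    rw [WeierstrassCurve.Affine.Point.add_self_of_Y_ne hy1]
    exact some_congr _ _ hX1 hY1
  have step2 : WeierstrassCurve.Affine.Point.some _ _ hns2 + WeierstrassCurve.Affine.Point.some _ _ hns1 = WeierstrassCurve.Affine.Point.some _ _ hns3 := by
    rw [WeierstrassCurve.Affine.Point.add_of_X_ne hx2]
    exact some_congr _ _ hX2 hY2
  have step3 : WeierstrassCurve.Affine.Point.some _ _ hns3 + WeierstrassCurve.Affine.Point.some _ _ hns1 = WeierstrassCurve.Affine.Point.some _ _ hns4 := by
    rw [WeierstrassCurve.Affine.Point.add_of_X_ne hx3]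
    exact some_congr _ _ hX3 hY3
  have step4 : WeierstrassCurve.Affine.Point.some _ _ hns4 + WeierstrassCurve.Affine.Point.some _ _ hns1 = WeierstrassCurve.Affine.Point.some _ _ hns5 := by
    rw [WeierstrassCurve.Affine.Point.add_of_X_ne hx4]
    exact some_congr _ _ hX4 hY4
  have step5 : WeierstrassCurve.Affine.Point.some _ _ hns5 + WeierstrassCurve.Affine.Point.some _ _ hns1 = WeierstrassCurve.Affine.Point.some _ _ hns6 := by
    rw [WeierstrassCurve.Affine.Point.add_of_X_ne hx5]
    exact some_congr _ _ hX5 hY5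
  have step6 : WeierstrassCurve.Affine.Point.some _ _ hns6 + WeierstrassCurve.Affine.Point.some _ _ hns1 = WeierstrassCurve.Affine.Point.some _ _ hns7 := by
    rw [WeierstrassCurve.Affine.Point.add_of_X_ne hx6]
    exact some_congr _ _ hX6 hY6
  have step7 : WeierstrassCurve.Affine.Point.some _ _ hns7 + WeierstrassCurve.Affine.Point.some _ _ hns1 = WeierstrassCurve.Affine.Point.some _ _ hns8 := by
    rw [WeierstrassCurve.Affine.Point.add_of_X_ne hx7]
    exact some_congr _ _ hX7 hY7
  have hy8 : ((1 : K19) * b19) = (Ebc b19 c19).negY 0 0 := by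
    simp only [WeierstrassCurve.Affine.negY, Ebc]; ring1
  have step8 : WeierstrassCurve.Affine.Point.some _ _ hns8 + WeierstrassCurve.Affine.Point.some _ _ hns1 = 0 := WeierstrassCurve.Affine.Point.add_of_Y_eq rfl hy8
  refine ⟨hD, hns1, ?_⟩
  set Q := WeierstrassCurve.Affine.Point.some _ _ hns1 with hQ
  have e2 : (2 : ℕ) • Q = WeierstrassCurve.Affine.Point.some _ _ hns2 := by rw [two_nsmul]; exact step1
  have e3 : (3 : ℕ) • Q = WeierstrassCurve.Affine.Point.some _ _ hns3 := by
    have h' : (3 : ℕ) • Q = (2 : ℕ) • Q + Q := succ_nsmul Q 2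
    rw [h', e2, step2]
  have e4 : (4 : ℕ) • Q = WeierstrassCurve.Affine.Point.some _ _ hns4 := by
    have h' : (4 : ℕ) • Q = (3 : ℕ) • Q + Q := succ_nsmul Q 3
    rw [h', e3, step3]
  have e5 : (5 : ℕ) • Q = WeierstrassCurve.Affine.Point.some _ _ hns5 := by
    have h' : (5 : ℕ) • Q = (4 : ℕ) • Q + Q := succ_nsmul Q 4
    rw [h', e4, step4]
  have e6 : (6 : ℕ) • Q = WeierstrassCurve.Affine.Point.some _ _ hns6 := by
    have h' : (6 : ℕ) • Q = (5 : ℕ) • Q + Q := succ_nsmul Q 5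
    rw [h', e5, step5]
  have e7 : (7 : ℕ) • Q = WeierstrassCurve.Affine.Point.some _ _ hns7 := by
    have h' : (7 : ℕ) • Q = (6 : ℕ) • Q + Q := succ_nsmul Q 6
    rw [h', e6, step6]
  have e8 : (8 : ℕ) • Q = WeierstrassCurve.Affine.Point.some _ _ hns8 := by
    have h' : (8 : ℕ) • Q = (7 : ℕ) • Q + Q := succ_nsmul Q 7
    rw [h', e7, step7]
  have e9 : (9 : ℕ) • Q = 0 := by
    have h' : (9 : ℕ) • Q = (8 : ℕ) • Q + Q := succ_nsmul Q 8
    rw [h', e8, step8]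
  have hdvd : addOrderOf Q ∣ 9 := addOrderOf_dvd_of_nsmul_eq_zero e9
  have hmem : addOrderOf Q ∈ Nat.divisors 9 := Nat.mem_divisors.mpr ⟨hdvd, by norm_num⟩
  have h139 : Nat.divisors 9 = {1, 3, 9} := by decide
  rw [h139] at hmem
  simp only [Finset.mem_insert, Finset.mem_singleton] at hmem
  rcases hmem with h1 | h3 | h9
  · exfalso
    exact WeierstrassCurve.Affine.Point.some_ne_zero hns1 (AddMonoid.addOrderOf_eq_one_iff.mp h1)
  · exfalso
    have := addOrderOf_nsmul_eq_zero Q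
    rw [h3, e3] at this
    exact WeierstrassCurve.Affine.Point.some_ne_zero hns3 this
  · exact h9
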